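/- Let L_k be an automorphic k-partition of V^(k) with |V| = n. Then for every i ∈ {1,…,n−k}, projecting the assembled partition back recovers L_k: p̂^i q̂^i L_k = L_k, where q̂^i L_k is the (k+i)-partition obtained by i-fold assembling and p̂^i projects (k+i)-tuples back to their k-projections. -/

import Mathlib

/-- A `k`-tuple of pairwise distinct elements of `V` (an element of `V^(k)`). -/
abbrev Tup (k : ℕ) (V : Type*) := Fin k ↪ V

/-- Delete the `i`-th coordinate of a `(k+1)`-tuple: the `i`-th `k`-projection `p̂_i`. -/
def projTup {V : Type*} {k : ℕ} (i : Fin (k + 1)) (α : Tup (k + 1) V) : Tup k V :=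
  ⟨α ∘ i.succAbove, α.injective.comp Fin.succAbove_right_injective⟩

/-- The `i`-th projection `p̂_i(U)` of a `(k+1)`-relation `U`. -/
def projSet {V : Type*} {k : ℕ} (i : Fin (k + 1)) (U : Set (Tup (k + 1) V)) :
    Set (Tup k V) :=
  projTup i '' U

/-- `p̂L`: the collection of all `k`-projections of the classes of `L`. -/
def pPart {V : Type*} {k : ℕ} (L : Set (Set (Tup (k + 1) V))) : Set (Set (Tup k V)) :=
  {S | ∃ U ∈ L, ∃ i : Fin (k + 1), S = projSet i U}

/-- `L` is p-symmetrical: any two projections of any two classes are equal or disjoint. -/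
def IsPSymm {V : Type*} {k : ℕ} (L : Set (Set (Tup (k + 1) V))) : Prop :=
  ∀ U ∈ L, ∀ U' ∈ L, ∀ i i' : Fin (k + 1),
    projSet i U = projSet i' U' ∨ Disjoint (projSet i U) (projSet i' U')

/-- Permute the coordinates of a tuple: `permTup π α = α ∘ π`. -/
def permTup {V : Type*} {k : ℕ} (π : Equiv.Perm (Fin k)) (α : Tup k V) : Tup k V :=
  π.toEmbedding.trans α

/-- `L` is s-symmetrical: permuting coordinates of a class yields a class. -/
def IsSSymm {V : Type*} {k : ℕ} (L : Set (Set (Tup k V))) : Prop :=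
  ∀ U ∈ L, ∀ π : Equiv.Perm (Fin k), (permTup π '' U) ∈ L

/-- Multiplicity of the `l`-tuple `β` in the multiprojection of `U` to the
(distinct) coordinate positions `w`. -/
noncomputable def multProj {V : Type*} {k l : ℕ} (U : Set (Tup k V)) (w : Fin l ↪ Fin k)
    (β : Tup l V) : ℕ :=
  {α ∈ U | w.trans α = β}.ncard

/-- A `k`-relation is mp-symmetrical if in each of its multiprojections every
occurring tuple occurs with the same multiplicity. -/
def IsMpSymmRel {V : Type*} {k : ℕ} (U : Set (Tup k V)) : Prop :=
  ∀ (l : ℕ) (w : Fin l ↪ Fin k) (β γ : Tup l V),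
    multProj U w β ≠ 0 → multProj U w γ ≠ 0 → multProj U w β = multProj U w γ

/-- `L` is mp-symmetrical if every class is. -/
def IsMpSymm {V : Type*} {k : ℕ} (L : Set (Set (Tup k V))) : Prop :=
  ∀ U ∈ L, IsMpSymmRel U

/-- A regular partition: s-, p- and mp-symmetrical. -/
def IsRegularPartition {V : Type*} {k : ℕ} (L : Set (Set (Tup (k + 1) V))) : Prop :=
  IsSSymm L ∧ IsPSymm L ∧ IsMpSymm L

/-- Two `(k+1)`-tuples are `q̂L`-related iff for each `i` their `i`-th projections lie
in the same class of `L`. -/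
def qRel {V : Type*} {k : ℕ} (L : Set (Set (Tup k V))) (α β : Tup (k + 1) V) : Prop :=
  ∀ i : Fin (k + 1), ∀ U ∈ L, (projTup i α ∈ U ↔ projTup i β ∈ U)

/-- `q̂L`: the `(k+1)`-partition assembled from the `k`-partition `L`. -/
def qPart {V : Type*} {k : ℕ} (L : Set (Set (Tup k V))) : Set (Set (Tup (k + 1) V)) :=
  {S | ∃ α : Tup (k + 1) V, S = {β | qRel L α β}}

/-- `α` and `β` are `i`-th projections, for the same `i`, of `(k+1)`-tuples lying in the
same class of `q̂L`. -/
def pqRelBase {V : Type*} {k : ℕ} (L : Set (Set (Tup k V))) (α β : Tup k V) : Prop :=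
  ∃ i : Fin (k + 1), ∃ α' β' : Tup (k + 1) V,
    projTup i α' = α ∧ projTup i β' = β ∧ qRel L α' β'

/-- `p̂q̂L`: the `k`-partition obtained by assembling `L` into `q̂L` and projecting back
(the generated equivalence of `pqRelBase`). -/
def pqPart {V : Type*} {k : ℕ} (L : Set (Set (Tup k V))) : Set (Set (Tup k V)) :=
  {S | ∃ α : Tup k V, S = {β | Relation.EqvGen (pqRelBase L) α β}}

/-- One-step reconstruction `q̂p̂(U)` of a `(k+1)`-relation from its projections. -/
def qpSet {V : Type*} {k : ℕ} (U : Set (Tup (k + 1) V)) : Set (Tup (k + 1) V) :=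
  {α | ∀ i : Fin (k + 1), projTup i α ∈ projSet i U}

/-- Iterated reconstruction `q̂^m p̂^m U` (deleting one coordinate at a time and
reassembling). -/
def qpIter (V : Type*) : (m : ℕ) → (k : ℕ) → Set (Tup k V) → Set (Tup k V)
  | 0, _, U => U
  | _ + 1, 0, U => U
  | m + 1, k + 1, U =>
      {α | ∀ i : Fin (k + 1), projTup i α ∈ qpIter V m k (projSet i U)}

/-- Iterated assembling `q̂^i L` of a `k`-partition. -/
def qIter (V : Type*) : (i : ℕ) → (k : ℕ) → Set (Set (Tup k V)) → Set (Set (Tup (k + i) V))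
  | 0, _, L => L
  | i + 1, k, L => qPart (qIter V i k L)

/-- `p̂^i M`: all projections of the classes of a `(k+i)`-partition onto `k`-element
(ordered) sets of coordinate positions. -/
def pIter {V : Type*} (i k : ℕ) (M : Set (Set (Tup (k + i) V))) : Set (Set (Tup k V)) :=
  {S | ∃ U ∈ M, ∃ w : Fin k ↪o Fin (k + i), S = (fun α => w.toEmbedding.trans α) '' U}

/-- The coordinatewise action of a permutation of `V` on tuples. -/
def actTup {V : Type*} {k : ℕ} (g : Equiv.Perm V) (α : Tup k V) : Tup k V :=
  α.trans g.toEmbedding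

/-- `Aut(L)`: the permutations of `V` preserving every class of `L`. -/
def AutP {V : Type*} {k : ℕ} (L : Set (Set (Tup k V))) : Set (Equiv.Perm V) :=
  {g | ∀ U ∈ L, actTup g '' U = U}

/-- The orbit of a tuple under a set of permutations. -/
def orbitOf {V : Type*} {k : ℕ} (G : Set (Equiv.Perm V)) (α : Tup k V) :
    Set (Tup k V) :=
  {β | ∃ g ∈ G, actTup g α = β}

/-- `L` is automorphic: its classes are exactly the orbits of `Aut(L)` on `V^(k)`. -/
def Automorphic {V : Type*} {k : ℕ} (L : Set (Set (Tup k V))) : Prop :=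
  ∀ S : Set (Tup k V), S ∈ L ↔ ∃ α : Tup k V, S = orbitOf (AutP L) α

/-- `Orb_k(G)`: the partition of `V^(k)` into orbits of the coordinatewise action of `G`. -/
def OrbPart {V : Type*} (k : ℕ) (G : Subgroup (Equiv.Perm V)) : Set (Set (Tup k V)) :=
  {S | ∃ α : Tup k V, S = orbitOf {g | g ∈ G} α}


section Aux

variable {V : Type*} {k : ℕ}

lemma actTup_injective (g : Equiv.Perm V) :
    Function.Injective (actTup (V := V) (k := k) g) := by
  intro a b h
  ext x
  have := congrArg (fun f : Tup k V => g.symm (f x)) h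
  simpa [actTup] using this

lemma actTup_inv_actTup (g : Equiv.Perm V) (α : Tup k V) :
    actTup g⁻¹ (actTup g α) = α := by
  ext x; simp [actTup]

lemma actTup_actTup_inv (g : Equiv.Perm V) (α : Tup k V) :
    actTup g (actTup g⁻¹ α) = α := by
  ext x; simp [actTup]

lemma projTup_actTup (g : Equiv.Perm V) (j : Fin (k + 1)) (α : Tup (k + 1) V) :
    projTup j (actTup g α) = actTup g (projTup j α) := by
  ext x; rfl

lemma trans_actTup {m : ℕ} (w : Fin k ↪ Fin m) (g : Equiv.Perm V) (α : Tup m V) :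
    w.trans (actTup g α) = actTup g (w.trans α) := by
  ext x; rfl

lemma mem_iff_of_actTup_image_eq {g : Equiv.Perm V} {P : Set (Tup k V)}
    (h : actTup g '' P = P) (x : Tup k V) : x ∈ P ↔ actTup g x ∈ P := by
  constructor
  · intro hx; rw [← h]; exact Set.mem_image_of_mem _ hx
  · intro hx
    rw [← h] at hx
    obtain ⟨y, hy, hyx⟩ := hx
    rwa [actTup_injective g hyx] at hy

lemma inv_mem_AutP {L : Set (Set (Tup k V))} {g : Equiv.Perm V} (hg : g ∈ AutP L) :
    g⁻¹ ∈ AutP L := by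
  intro U hU
  have h := hg U hU
  conv_lhs => rw [← h]
  rw [← Set.image_comp]
  have : (actTup g⁻¹ ∘ actTup g) = (id : Tup k V → Tup k V) := by
    funext α; exact actTup_inv_actTup g α
  rw [this, Set.image_id]

lemma qRel_refl (L : Set (Set (Tup k V))) (α : Tup (k + 1) V) : qRel L α α :=
  fun _ _ _ => Iff.rfl

lemma qRel_symm {L : Set (Set (Tup k V))} {α β : Tup (k + 1) V} (h : qRel L α β) :
    qRel L β α := fun i U hU => (h i U hU).symm

lemma qRel_trans {L : Set (Set (Tup k V))} {α β γ : Tup (k + 1) V}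
    (h1 : qRel L α β) (h2 : qRel L β γ) : qRel L α γ :=
  fun i U hU => (h1 i U hU).trans (h2 i U hU)

lemma qPart_isPartition (L : Set (Set (Tup k V))) : Setoid.IsPartition (qPart L) := by
  constructor
  · rintro ⟨α, hα⟩
    have : α ∈ (∅ : Set (Tup (k + 1) V)) := by rw [hα]; exact qRel_refl L α
    exact this
  · intro β
    refine ⟨{γ | qRel L β γ}, ⟨⟨β, rfl⟩, qRel_refl L β⟩, ?_⟩
    rintro S ⟨⟨α, rfl⟩, hβ⟩
    ext γ
    simp only [Set.mem_setOf_eq]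
    exact ⟨fun h => qRel_trans (qRel_symm hβ) h, fun h => qRel_trans hβ h⟩

lemma qIter_isPartition {L : Set (Set (Tup k V))} (hL : Setoid.IsPartition L) :
    ∀ m, Setoid.IsPartition (qIter V m k L)
  | 0 => hL
  | m + 1 => qPart_isPartition _

lemma qIter_invariant {L : Set (Set (Tup k V))} {g : Equiv.Perm V} (hg : g ∈ AutP L) :
    ∀ m, ∀ U ∈ qIter V m k L, actTup g '' U = U := by
  intro m
  induction m with
  | zero => exact hg
  | succ m ih =>
    rintro U ⟨α₀, rfl⟩
    have key : ∀ β : Tup (k + m + 1) V,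
        qRel (qIter V m k L) α₀ β ↔ qRel (qIter V m k L) α₀ (actTup g β) := by
      intro β
      constructor
      · intro h j U' hU'
        rw [projTup_actTup, ← mem_iff_of_actTup_image_eq (ih U' hU')]
        exact h j U' hU'
      · intro h j U' hU'
        rw [h j U' hU', projTup_actTup, ← mem_iff_of_actTup_image_eq (ih U' hU')]
    apply Set.Subset.antisymm
    · rintro β ⟨γ, hγ, rfl⟩
      exact (key γ).1 hγ
    · intro β hβ
      refine ⟨actTup g⁻¹ β, ?_, actTup_actTup_inv g β⟩
      have := (key (actTup g⁻¹ β)).2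
      rw [actTup_actTup_inv g β] at this
      exact this hβ

lemma ordEmb_fin_self (w : Fin k ↪o Fin k) (x : Fin k) : w x = x := by
  have hsurj : Function.Surjective w := Finite.surjective_of_injective w.injective
  have h : Set.range (w : Fin k → Fin k) = Set.range (id : Fin k → Fin k) := by
    rw [Set.range_eq_univ.2 hsurj, Set.range_id]
  have hw : StrictMono (w : Fin k → Fin k) := w.strictMono
  have hid : StrictMono (id : Fin k → Fin k) := strictMono_id
  have := (@StrictMono.range_inj (Fin k) (Fin k) _ _
    (inferInstance : WellFoundedLT (Fin k)) _ _ hw hid).1 h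
  exact congrFun this x

lemma ordEmb_factor {m : ℕ} (w : Fin k ↪o Fin (k + m + 1)) :
    ∃ (j : Fin (k + m + 1)) (w' : Fin k ↪o Fin (k + m)),
      ∀ x, w x = j.succAbove (w' x) := by
  have hne : (Set.range (w : Fin k → Fin (k + m + 1)))ᶜ.Nonempty := by
    rw [Set.nonempty_compl]
    intro hu
    have hsurj : Function.Surjective w := by rw [← Set.range_eq_univ]; exact hu
    have := Fintype.card_le_of_surjective _ hsurj
    simp at this
  obtain ⟨j, hj⟩ := hne
  have hsub : ∀ x, ∃ y : Fin (k + m), j.succAbove y = w x := by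
    intro x
    have : w x ∈ ({j}ᶜ : Set (Fin (k + m + 1))) := by
      intro h
      exact hj (by simpa using h ▸ Set.mem_range_self x)
    rw [← Fin.range_succAbove j] at this
    exact this
  classical
  choose f hf using hsub
  have hsm : StrictMono f := by
    intro a b hab
    have := w.strictMono hab
    rw [← hf a, ← hf b] at this
    exact (Fin.succAbove_lt_succAbove_iff).1 this
  exact ⟨j, OrderEmbedding.ofStrictMono f hsm, fun x => (hf x).symm⟩

lemma proj_subset_class {L : Set (Set (Tup k V))} (hL : Setoid.IsPartition L) :
    ∀ m, ∀ S ∈ qIter V m k L, ∀ w : Fin k ↪o Fin (k + m),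
      ∃ C ∈ L, (fun α : Tup (k + m) V => w.toEmbedding.trans α) '' S ⊆ C := by
  intro m
  induction m with
  | zero =>
    intro S hS w
    refine ⟨S, hS, ?_⟩
    rintro β ⟨α, hα, rfl⟩
    have : w.toEmbedding.trans α = α := by
      ext x
      simp [Function.Embedding.trans, ordEmb_fin_self w x]
    show w.toEmbedding.trans α ∈ S
    rwa [this]
  | succ m ih =>
    rintro S ⟨α₀, rfl⟩ w
    obtain ⟨j, w', hw⟩ := ordEmb_factor w
    obtain ⟨U, ⟨hU, hmem⟩, -⟩ := (qIter_isPartition hL m).2 (projTup j α₀)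
    obtain ⟨C, hC, hsub⟩ := ih U hU w'
    refine ⟨C, hC, ?_⟩
    rintro β ⟨α, hα, rfl⟩
    have hproj : projTup j α ∈ U := (hα j U hU).1 hmem
    have heq : w.toEmbedding.trans α = w'.toEmbedding.trans (projTup j α) := by
      ext x
      simp only [Function.Embedding.trans_apply]
      rw [show (w.toEmbedding x) = j.succAbove (w' x) from hw x]
      rfl
    show w.toEmbedding.trans α ∈ C
    rw [heq]
    exact hsub ⟨projTup j α, hproj, rfl⟩

lemma pIter_subset {V : Type*} [Fintype V] {k i : ℕ}
    {L : Set (Set (Tup k V))} (hL : Setoid.IsPartition L) (hauto : Automorphic L)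
    (hi1 : 1 ≤ i) : pIter i k (qIter V i k L) ⊆ L := by
  obtain ⟨i', rfl⟩ : ∃ i', i = i' + 1 := ⟨i - 1, by omega⟩
  rintro P ⟨S, hS, w, rfl⟩
  obtain ⟨C, hC, hsub⟩ := proj_subset_class hL (i' + 1) S hS w
  obtain ⟨α₀, hCo⟩ := (hauto C).1 hC
  -- S is nonempty
  obtain ⟨αS, hαS⟩ : S.Nonempty := by
    obtain ⟨a, rfl⟩ := hS
    exact ⟨a, qRel_refl _ a⟩
  set P := (fun α : Tup (k + (i' + 1)) V => w.toEmbedding.trans α) '' S with hP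
  have hβ : w.toEmbedding.trans αS ∈ P := ⟨αS, hαS, rfl⟩
  set β := w.toEmbedding.trans αS with hβdef
  have hβC : β ∈ C := hsub hβ
  -- P is invariant under every g ∈ AutP L
  have hPinv : ∀ g ∈ AutP L, actTup g '' P = P := by
    intro g hg
    rw [hP, ← Set.image_comp]
    have : (actTup g ∘ fun α : Tup (k + (i' + 1)) V => w.toEmbedding.trans α)
        = (fun α : Tup (k + (i' + 1)) V => w.toEmbedding.trans α) ∘ actTup g := by
      funext α; exact (trans_actTup _ g α).symm
    rw [this, Set.image_comp, qIter_invariant hg (i' + 1) S hS]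
  -- C ⊆ P
  have hCP : C ⊆ P := by
    intro γ hγ
    rw [hCo] at hγ hβC
    obtain ⟨g, hg, hgβ⟩ := hβC
    obtain ⟨h, hh, rfl⟩ := hγ
    have hα₀ : α₀ = actTup g⁻¹ β := by rw [← hgβ, actTup_inv_actTup]
    have h1 : actTup g⁻¹ β ∈ P :=
      (mem_iff_of_actTup_image_eq (hPinv g⁻¹ (inv_mem_AutP hg)) β).1 hβ
    have h2 := (mem_iff_of_actTup_image_eq (hPinv h hh) (actTup g⁻¹ β)).1 h1
    rwa [← hα₀] at h2
  have : P = C := Set.Subset.antisymm hsub hCP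
  rwa [this]

lemma exists_extend_tup {V : Type*} [Fintype V] {k i : ℕ}
    (hcard : k + i ≤ Fintype.card V) (α : Tup k V) (hk : k ≤ k + i) :
    ∃ α' : Tup (k + i) V, ∀ x : Fin k, α' (Fin.castLE hk x) = α x := by
  classical
  have hcr : Fintype.card (Set.range α) = k := by
    rw [Fintype.card_range]; simp
  have hcc : i ≤ Fintype.card ((Set.range α)ᶜ : Set V) := by
    rw [Fintype.card_compl_set, hcr]; omega
  obtain ⟨e⟩ : Nonempty (Fin i ↪ ((Set.range α)ᶜ : Set V)) := by
    apply Function.Embedding.nonempty_of_card_le; simpa using hcc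
  refine ⟨⟨fun x => if h : (x : ℕ) < k then α ⟨x, h⟩ else (e ⟨(x : ℕ) - k, by omega⟩ : V), ?_⟩,
      ?_⟩
  · intro a b hab
    by_cases ha : (a : ℕ) < k <;> by_cases hb : (b : ℕ) < k <;>
      simp only [ha, hb, dif_pos, dif_neg, not_false_iff] at hab
    · have h3 := congrArg Fin.val (α.injective hab)
      exact Fin.ext h3
    · exact absurd ⟨⟨(a : ℕ), ha⟩, hab⟩ (e ⟨(b : ℕ) - k, by omega⟩).2
    · exact absurd ⟨⟨(b : ℕ), hb⟩, hab.symm⟩ (e ⟨(a : ℕ) - k, by omega⟩).2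
    · have h3 : ((a : ℕ) - k) = ((b : ℕ) - k) :=
        congrArg Fin.val (e.injective (Subtype.ext hab))
      exact Fin.ext (by omega)
  · intro x
    exact dif_pos x.isLt

end Aux

/-- If `L` is an automorphic `k`-partition of `V^(k)`, `|V| = n`, then for
every `i ∈ {1, …, n − k}`, `p̂^i q̂^i L = L`. -/
theorem pIter_qIter_eq_of_automorphic {V : Type*} [Fintype V] (k i : ℕ)
    (L : Set (Set (Tup k V))) (hL : Setoid.IsPartition L) (hauto : Automorphic L)
    (hi1 : 1 ≤ i) (hi2 : i ≤ Fintype.card V - k) :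
    pIter i k (qIter V i k L) = L := by
  apply Set.Subset.antisymm (pIter_subset hL hauto hi1)
  intro C hC
  -- C is nonempty
  obtain ⟨α, hα⟩ : C.Nonempty := by
    rcases Set.eq_empty_or_nonempty C with h | h
    · exact absurd (h ▸ hC) hL.1
    · exact h
  have hk : k ≤ Fintype.card V := by by_contra h; omega
  have hcard : k + i ≤ Fintype.card V := by omega
  have hki : k ≤ k + i := Nat.le_add_right k i
  obtain ⟨α', hα'⟩ := exists_extend_tup hcard α hki
  obtain ⟨i', rfl⟩ : ∃ i', i = i' + 1 := ⟨i - 1, by omega⟩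
  -- the class of α' in q̂^i L
  set S : Set (Tup (k + (i' + 1)) V) := {β | qRel (qIter V i' k L) α' β} with hSdef
  have hS : S ∈ qIter V (i' + 1) k L := ⟨α', rfl⟩
  set w : Fin k ↪o Fin (k + (i' + 1)) := Fin.castLEOrderEmb hki with hwdef
  have hmemP : (fun β : Tup (k + (i' + 1)) V => w.toEmbedding.trans β) '' S
      ∈ pIter (i' + 1) k (qIter V (i' + 1) k L) := ⟨S, hS, w, rfl⟩
  have hPL := pIter_subset hL hauto hi1 hmemP
  -- α belongs to this projection
  have hαP : α ∈ (fun β : Tup (k + (i' + 1)) V => w.toEmbedding.trans β) '' S := by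
    refine ⟨α', qRel_refl _ α', ?_⟩
    ext x
    exact hα' x
  -- partition uniqueness
  obtain ⟨B, ⟨-, -⟩, hBu⟩ := hL.2 α
  have h1 := hBu _ ⟨hPL, hαP⟩
  have h2 := hBu C ⟨hC, hα⟩
  rw [h2, ← h1]
  exact hmemP
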